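/- (SE of the random-mechanism multisite phosphorylation network.) Fix n ≥ 1 and positive reals r₁, r₂. Let the species type be K ⊕ (Fin n → Bool), where the right summand A(s) encodes the phosphorylation status s of the n sites of a protein and K is a kinase. Consider the reaction network with, for every i : Fin n and every s : Fin n → Bool with s i = false, the reactions A(s) + K →(r₁) A(update s i true) and A(update s i true) →(r₂) A(s) + K. Then the equivalence relation on species that relates K only to itself and relates A(s) to A(s') iff the number of indices i with s i = true equals the number of indices i with s' i = true is a species equivalence for this network. -/

import Mathlib

open Classical

noncomputable section

/-- A reaction of a stochastic mass-action network:
reagent multiset, kinetic parameter, product multiset. -/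
structure Reaction (S : Type*) where
  reag : Multiset S
  rate : ℝ
  prod : Multiset S

variable {S : Type*}

/-- `classCount sd s σ` is the cumulative multiplicity in `σ` of the species in the
≈-equivalence class of `s` (every ≈-class is of this form). -/
def classCount (sd : Setoid S) (s : S) (σ : Multiset S) : ℕ :=
  (σ.filter (sd.r s)).card

/-- The multiset lifting `≈ₗ` of an equivalence relation `≈` on species:
two multisets are related iff they have the same cumulative multiplicity
of every ≈-equivalence class. -/
def mlift (sd : Setoid S) (σ σ' : Multiset S) : Prop :=
  ∀ s : S, classCount sd s σ = classCount sd s σ'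

/-- Cumulative multiplicity in `σ` of an ≈-equivalence class given as an
element of the quotient. -/
def classCountQ (sd : Setoid S) (H : Quotient sd) (σ : Multiset S) : ℕ :=
  (σ.filter (fun x => Quotient.mk sd x = H)).card

/-- The multiset lifting is itself an equivalence relation on multisets. -/
def mliftSetoid (sd : Setoid S) : Setoid (Multiset S) :=
  ⟨mlift sd, ⟨fun _ _ => rfl, fun h s => (h s).symm, fun h1 h2 s => (h1 s).trans (h2 s)⟩⟩

/-- The set of reagent multisets of a reaction network. -/
def Reags (R : Finset (Reaction S)) : Finset (Multiset S) := R.image Reaction.reag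

/-- The set of product multisets of a reaction network. -/
def Prods (R : Finset (Reaction S)) : Finset (Multiset S) := R.image Reaction.prod

/-- Sum of the kinetic parameters of all reactions with reagents `ρ` and products `π`. -/
def rrOff (R : Finset (Reaction S)) (ρ π : Multiset S) : ℝ :=
  ∑ x ∈ R.filter (fun x => x.reag = ρ ∧ x.prod = π), x.rate

/-- The reaction rate `rr(ρ,π)`: the sum of the kinetic parameters of the reactions from
`ρ` to `π` when `ρ ≠ π`, with diagonal correction `rr(ρ,ρ) = -∑_{π' ∈ Prod(R), π' ≠ ρ} rr(ρ,π')`. -/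
def rr (R : Finset (Reaction S)) (ρ π : Multiset S) : ℝ :=
  if ρ = π then -∑ π' ∈ (Prods R).erase ρ, rrOff R ρ π'
  else rrOff R ρ π

/-- Cumulative reaction rate `rr[ρ,B] = ∑_{π ∈ B ∩ (Prod(R) ∪ {ρ})} rr(ρ,π)`. -/
def rrSet (R : Finset (Reaction S)) (ρ : Multiset S) (B : Set (Multiset S)) : ℝ :=
  ∑ π ∈ (insert ρ (Prods R)).filter (· ∈ B), rr R ρ π

/-- Mass-action propensity of a reaction in state `σ`. -/
def propensity (σ : Multiset S) (x : Reaction S) : ℝ :=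
  x.rate * ∏ s ∈ x.reag.toFinset, ((σ.count s).choose (x.reag.count s) : ℝ)

/-- Sum of the propensities in `σ` of all reactions leading from state `σ` to state `θ`. -/
def qOff (R : Finset (Reaction S)) (σ θ : Multiset S) : ℝ :=
  ∑ x ∈ R.filter (fun x => x.reag ≤ σ ∧ σ - x.reag + x.prod = θ), propensity σ x

/-- The (finitely many) states reachable from `σ` in one reaction. -/
def succs (R : Finset (Reaction S)) (σ : Multiset S) : Finset (Multiset S) :=
  (R.filter (fun x => x.reag ≤ σ)).image (fun x => σ - x.reag + x.prod)

/-- CTMC transition rate `q(σ,θ)` of the Markov chain of the network, with the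
convention `q(σ,σ) = -∑_{θ ≠ σ} q(σ,θ)`. -/
def q (R : Finset (Reaction S)) (σ θ : Multiset S) : ℝ :=
  if σ = θ then -∑ θ' ∈ (succs R σ).erase σ, qOff R σ θ'
  else qOff R σ θ

/-- Aggregate transition rate `q[σ,B] = ∑_{θ ∈ B} q(σ,θ)` (finitely many nonzero terms). -/
def qSet (R : Finset (Reaction S)) (σ : Multiset S) (B : Set (Multiset S)) : ℝ :=
  ∑ θ ∈ (insert σ (succs R σ)).filter (· ∈ B), q R σ θ

/-- All kinetic parameters of the network are positive. -/
def posRates (R : Finset (Reaction S)) : Prop := ∀ x ∈ R, 0 < x.rate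

/-- Species equivalence (SE): for all related species `s ≈ s'`, every context `ρ` with
`s+ρ` or `s'+ρ` a reagent multiset of `R`, and every ≈ₗ-class containing at least one
product multiset (represented by `π₀ ∈ Prod(R)`), the cumulative reaction rates agree. -/
def isSE (sd : Setoid S) (R : Finset (Reaction S)) : Prop :=
  ∀ s s' : S, sd.r s s' → ∀ ρ : Multiset S,
    ((s ::ₘ ρ) ∈ Reags R ∨ (s' ::ₘ ρ) ∈ Reags R) →
    ∀ π₀ ∈ Prods R,
      rrSet R (s ::ₘ ρ) {π | mlift sd π₀ π} = rrSet R (s' ::ₘ ρ) {π | mlift sd π₀ π}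

/-- `f` is a representative map for the equivalence `sd`. -/
def IsRep (sd : Setoid S) (f : S → S) : Prop :=
  (∀ s : S, sd.r (f s) s) ∧ ∀ s s' : S, sd.r s s' → f s = f s'

/-- The reduced reaction network of `R` by the representative map `f`: one reaction
`(ρ̂, β, π̂)` for each pair `(ρ̂, π̂)` with `ρ̂ ∈ Reag(R)`, `f(ρ̂) = ρ̂`, `f(π̂) = π̂` and
`β = ∑ { α | (ρ̂,α,π) ∈ R, f(π) = π̂ }` positive. -/
def reduced (R : Finset (Reaction S)) (f : S → S) : Finset (Reaction S) :=
  ((((R.image (fun x => (x.reag, x.prod.map f))).filter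
      (fun p => p.1.map f = p.1)).image
    (fun p => (⟨p.1, ∑ x ∈ R.filter (fun x => x.reag = p.1 ∧ x.prod.map f = p.2), x.rate,
      p.2⟩ : Reaction S)))).filter (fun x => 0 < x.rate)

/-- SMB-reaction rate: sum of parameters with no diagonal correction. -/
def rrSMBSet (R : Finset (Reaction S)) (ρ : Multiset S) (B : Set (Multiset S)) : ℝ :=
  ∑ π ∈ (Prods R).filter (· ∈ B), rrOff R ρ π

/-- Syntactic Markovian bisimulation. -/
def isSMB (sd : Setoid S) (R : Finset (Reaction S)) : Prop :=
  ∀ s s' : S, sd.r s s' → ∀ ρ π₀ : Multiset S,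
    rrSMBSet R (s ::ₘ ρ) {π | mlift sd π₀ π} = rrSMBSet R (s' ::ₘ ρ) {π | mlift sd π₀ π}

/-- The species of the multisite phosphorylation network: the kinase `K` (left summand)
and the protein configurations `A(s)` for `s : Fin n → Bool` (right summand). -/
abbrev PhosSp (n : ℕ) : Type := Unit ⊕ (Fin n → Bool)

/-- The equivalence relating `K` only to itself and `A(s)` to `A(s')` iff `s` and `s'`
have the same number of phosphorylated (true) sites. -/
def phosSetoid (n : ℕ) : Setoid (PhosSp n) :=
  Setoid.ker (Sum.map id
    (fun s : Fin n → Bool => (Finset.univ.filter (fun i : Fin n => s i = true)).card))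

/-- The random-mechanism multisite phosphorylation network: for every site `i` and every
configuration `s` with `s i = false`, the reactions
`A(s) + K →(r₁) A(update s i true)` and `A(update s i true) →(r₂) A(s) + K`. -/
def phosNetwork (n : ℕ) (r₁ r₂ : ℝ) : Finset (Reaction (PhosSp n)) :=
  (((Finset.univ : Finset (Fin n × (Fin n → Bool))).filter (fun p => p.2 p.1 = false)).image
      (fun p => (⟨{Sum.inr p.2, Sum.inl ()}, r₁,
        {Sum.inr (Function.update p.2 p.1 true)}⟩ : Reaction (PhosSp n))))
    ∪ (((Finset.univ : Finset (Fin n × (Fin n → Bool))).filter (fun p => p.2 p.1 = false)).image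
      (fun p => (⟨{Sum.inr (Function.update p.2 p.1 true)}, r₂,
        {Sum.inr p.2, Sum.inl ()}⟩ : Reaction (PhosSp n))))

/-! ### Auxiliary lemmas -/

section Aux

lemma classCount_ker {T : Type*} (f : S → T) (s : S) (σ : Multiset S) :
    classCount (Setoid.ker f) s σ = (σ.map f).count (f s) := by
  classical
  rw [classCount, Multiset.count_map]
  congr 1

lemma mlift_ker_iff {T : Type*} (f : S → T) (σ σ' : Multiset S) :
    mlift (Setoid.ker f) σ σ' ↔ σ.map f = σ'.map f := by
  classical
  constructor
  · intro h
    ext b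
    rcases Classical.em (b ∈ σ.map f) with hb | hb
    · obtain ⟨a, _, rfl⟩ := Multiset.mem_map.1 hb
      simpa [classCount_ker] using h a
    · rcases Classical.em (b ∈ σ'.map f) with hb' | hb'
      · obtain ⟨a, _, rfl⟩ := Multiset.mem_map.1 hb'
        simpa [classCount_ker] using h a
      · rw [Multiset.count_eq_zero_of_notMem hb, Multiset.count_eq_zero_of_notMem hb']
  · intro h s
    rw [classCount_ker, classCount_ker, h]

lemma sum_rrOff (R : Finset (Reaction S)) (ρ : Multiset S) (T : Finset (Multiset S)) :
    ∑ π ∈ T, rrOff R ρ π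
      = ∑ x ∈ R.filter (fun x => x.reag = ρ ∧ x.prod ∈ T), x.rate := by
  classical
  have h := Finset.sum_fiberwise_eq_sum_filter (R.filter fun x => x.reag = ρ) T
    Reaction.prod Reaction.rate
  simp only [Finset.filter_filter] at h
  rw [← h]
  unfold rrOff
  apply Finset.sum_congr rfl
  intro π _
  apply Finset.sum_congr _ (fun _ _ => rfl)
  apply Finset.filter_congr
  intro x _
  tauto

lemma rr_diag (R : Finset (Reaction S)) (ρ : Multiset S) :
    rr R ρ ρ = -∑ x ∈ R.filter (fun x => x.reag = ρ ∧ x.prod ≠ ρ), x.rate := by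
  classical
  rw [rr, if_pos rfl, sum_rrOff]
  congr 1
  apply Finset.sum_congr _ (fun _ _ => rfl)
  apply Finset.filter_congr
  intro x hx
  simp only [Finset.mem_erase, Prods, Finset.mem_image]
  constructor
  · rintro ⟨h1, h2, _⟩; exact ⟨h1, h2⟩
  · rintro ⟨h1, h2⟩; exact ⟨h1, h2, ⟨x, hx, rfl⟩⟩

lemma rrSet_decomp (R : Finset (Reaction S)) (ρ : Multiset S) (B : Set (Multiset S)) :
    rrSet R ρ B = (if ρ ∈ B then rr R ρ ρ else 0)
      + ∑ x ∈ R.filter (fun x => x.reag = ρ ∧ x.prod ∈ B ∧ x.prod ≠ ρ), x.rate := by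
  classical
  have hT : ∑ π ∈ ((Prods R).erase ρ).filter (· ∈ B), rr R ρ π
      = ∑ x ∈ R.filter (fun x => x.reag = ρ ∧ x.prod ∈ B ∧ x.prod ≠ ρ), x.rate := by
    have heq : ∀ π ∈ ((Prods R).erase ρ).filter (· ∈ B), rr R ρ π = rrOff R ρ π := by
      intro π hπ
      simp only [Finset.mem_filter, Finset.mem_erase] at hπ
      rw [rr, if_neg (Ne.symm hπ.1.1)]
    rw [Finset.sum_congr rfl heq, sum_rrOff]
    apply Finset.sum_congr _ (fun _ _ => rfl)
    apply Finset.filter_congr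
    intro x hx
    constructor
    · rintro ⟨hr, hm⟩
      rw [Finset.mem_filter, Finset.mem_erase] at hm
      exact ⟨hr, hm.2, hm.1.1⟩
    · rintro ⟨hr, hBm, hne⟩
      refine ⟨hr, ?_⟩
      rw [Finset.mem_filter, Finset.mem_erase]
      exact ⟨⟨hne, Finset.mem_image.2 ⟨x, hx, rfl⟩⟩, hBm⟩
  rw [rrSet]
  have hins : insert ρ (Prods R) = insert ρ ((Prods R).erase ρ) := by
    ext x; simp only [Finset.mem_insert, Finset.mem_erase]; tauto
  rw [hins, Finset.filter_insert]
  by_cases hB : ρ ∈ B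
  · rw [if_pos hB, if_pos hB, Finset.sum_insert (by simp), hT]
  · rw [if_neg hB, if_neg hB, hT, zero_add]

end Aux

section Phos

variable {n : ℕ}

/-- Number of phosphorylated sites. -/
def cnt (s : Fin n → Bool) : ℕ := (Finset.univ.filter (fun i : Fin n => s i = true)).card

/-- The kernel function of `phosSetoid`. -/
def Fm : PhosSp n → Unit ⊕ ℕ :=
  Sum.map id (fun s : Fin n → Bool => (Finset.univ.filter (fun i : Fin n => s i = true)).card)

lemma phosSetoid_eq : phosSetoid n = Setoid.ker (Fm (n := n)) := rfl

lemma Fm_inr (u : Fin n → Bool) : Fm (Sum.inr u) = Sum.inr (cnt u) := rfl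

lemma Fm_inl : Fm (n := n) (Sum.inl ()) = Sum.inl () := rfl

lemma mlift_phos_iff (π₀ π : Multiset (PhosSp n)) :
    mlift (phosSetoid n) π₀ π ↔ π₀.map Fm = π.map Fm := by
  rw [phosSetoid_eq]; exact mlift_ker_iff _ _ _

lemma cnt_update_true {s : Fin n → Bool} {i : Fin n} (h : s i = false) :
    cnt (Function.update s i true) = cnt s + 1 := by
  unfold cnt
  have he : (Finset.univ.filter (fun j => Function.update s i true j = true))
      = insert i (Finset.univ.filter (fun j => s j = true)) := by
    ext j
    simp only [Finset.mem_filter, Finset.mem_univ, true_and, Finset.mem_insert,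
      Function.update_apply]
    by_cases hj : j = i <;> simp [hj]
  rw [he, Finset.card_insert_of_notMem (by simp [h])]

lemma update_false_update_true {t : Fin n → Bool} {i : Fin n} (h : t i = true) :
    Function.update (Function.update t i false) i true = t := by
  rw [Function.update_idem, ← h, Function.update_eq_self]

lemma cnt_update_false {t : Fin n → Bool} {i : Fin n} (h : t i = true) :
    cnt t = cnt (Function.update t i false) + 1 := by
  have h2 : (Function.update t i false) i = false := by simp
  have h3 := cnt_update_true (s := Function.update t i false) (i := i) h2
  rwa [update_false_update_true h] at h3

lemma card_false (s : Fin n → Bool) :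
    (Finset.univ.filter (fun i : Fin n => s i = false)).card = n - cnt s := by
  have h := Finset.card_filter_add_card_filter_not
    (s := (Finset.univ : Finset (Fin n))) (p := fun i => s i = true)
  have h2 : Finset.univ.filter (fun i : Fin n => ¬ s i = true)
      = Finset.univ.filter (fun i : Fin n => s i = false) := by
    ext i; simp
  rw [h2] at h
  simp only [Finset.card_univ, Fintype.card_fin] at h
  unfold cnt
  omega

/-- Forward reaction. -/
def fwdR (r₁ : ℝ) (p : Fin n × (Fin n → Bool)) : Reaction (PhosSp n) :=
  ⟨{Sum.inr p.2, Sum.inl ()}, r₁, {Sum.inr (Function.update p.2 p.1 true)}⟩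

/-- Backward reaction. -/
def bwdR (r₂ : ℝ) (p : Fin n × (Fin n → Bool)) : Reaction (PhosSp n) :=
  ⟨{Sum.inr (Function.update p.2 p.1 true)}, r₂, {Sum.inr p.2, Sum.inl ()}⟩

/-- Parameter domain. -/
def Dom (n : ℕ) : Finset (Fin n × (Fin n → Bool)) :=
  Finset.univ.filter (fun p => p.2 p.1 = false)

lemma phosNetwork_eq (r₁ r₂ : ℝ) :
    phosNetwork n r₁ r₂ = (Dom n).image (fwdR r₁) ∪ (Dom n).image (bwdR r₂) := rfl

lemma pair_eq_pair_iff {u v : Fin n → Bool} :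
    ({Sum.inr u, Sum.inl ()} : Multiset (PhosSp n)) = {Sum.inr v, Sum.inl ()} ↔ u = v := by
  constructor
  · intro h
    have hm : (Sum.inr u : PhosSp n) ∈ ({Sum.inr v, Sum.inl ()} : Multiset (PhosSp n)) := by
      rw [← h]; simp
    simpa using hm
  · rintro rfl; rfl

lemma update_inj {u : Fin n → Bool} {i j : Fin n} (hi : u i = false) (_hj : u j = false)
    (h : Function.update u i true = Function.update u j true) : i = j := by
  by_contra hne
  have h2 := congrFun h i
  simp [Function.update_apply, hne, hi] at h2

lemma fwdR_injOn (r₁ : ℝ) : ∀ p ∈ Dom n, ∀ q ∈ Dom n, fwdR r₁ p = fwdR r₁ q → p = q := by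
  intro p hp q hq h
  simp only [Dom, Finset.mem_filter, Finset.mem_univ, true_and] at hp hq
  have h1 : p.2 = q.2 := pair_eq_pair_iff.1 (congrArg Reaction.reag h)
  have h2 : Function.update p.2 p.1 true = Function.update q.2 q.1 true := by
    have h3 := congrArg Reaction.prod h
    simpa [fwdR, Multiset.singleton_inj] using h3
  rw [h1] at h2 hp
  exact Prod.ext (update_inj hp hq h2) h1

lemma bwdR_injOn (r₂ : ℝ) : ∀ p ∈ Dom n, ∀ q ∈ Dom n, bwdR r₂ p = bwdR r₂ q → p = q := by
  intro p hp q hq h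
  simp only [Dom, Finset.mem_filter, Finset.mem_univ, true_and] at hp hq
  have h1 : p.2 = q.2 := pair_eq_pair_iff.1 (congrArg Reaction.prod h)
  have h2 : Function.update p.2 p.1 true = Function.update q.2 q.1 true := by
    have h3 := congrArg Reaction.reag h
    simpa [bwdR, Multiset.singleton_inj] using h3
  rw [h1] at h2 hp
  exact Prod.ext (update_inj hp hq h2) h1

lemma sum_phos (r₁ r₂ : ℝ) (P : Reaction (PhosSp n) → Prop) :
    ∑ x ∈ (phosNetwork n r₁ r₂).filter P, x.rate
      = r₁ * ((Dom n).filter (fun p => P (fwdR r₁ p))).card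
        + r₂ * ((Dom n).filter (fun p => P (bwdR r₂ p))).card := by
  classical
  have hdisj : Disjoint (((Dom n).image (fwdR r₁)).filter P)
      (((Dom n).image (bwdR r₂)).filter P) := by
    simp only [Finset.disjoint_left, Finset.mem_filter, Finset.mem_image]
    rintro x ⟨⟨p, _, rfl⟩, _⟩ ⟨⟨q, _, hq⟩, _⟩
    have hc := congrArg (fun y => Multiset.card y.reag) hq
    simp [fwdR, bwdR] at hc
  rw [phosNetwork_eq, Finset.filter_union, Finset.sum_union hdisj,
    Finset.filter_image, Finset.filter_image, Finset.sum_image, Finset.sum_image]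
  · simp [fwdR, bwdR, Finset.sum_const, nsmul_eq_mul, mul_comm]
  · intro p hp q hq h
    exact bwdR_injOn r₂ p (Finset.mem_filter.1 hp).1 q (Finset.mem_filter.1 hq).1 h
  · intro p hp q hq h
    exact fwdR_injOn r₁ p (Finset.mem_filter.1 hp).1 q (Finset.mem_filter.1 hq).1 h

lemma filter_congr'' {α : Type*} {s : Finset α} {p q : α → Prop} {h1 : DecidablePred p}
    {h2 : DecidablePred q} (h : ∀ x ∈ s, p x ↔ q x) : s.filter p = s.filter q := by
  ext a
  simp only [Finset.mem_filter]
  exact ⟨fun ⟨ha, hp⟩ => ⟨ha, (h a ha).1 hp⟩, fun ⟨ha, hq⟩ => ⟨ha, (h a ha).2 hq⟩⟩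

lemma filter_eq_empty'' {α : Type*} {s : Finset α} {p : α → Prop} {h1 : DecidablePred p}
    (h : ∀ x ∈ s, ¬ p x) : s.filter p = ∅ := by
  ext a
  simp only [Finset.mem_filter, Finset.notMem_empty, iff_false]
  rintro ⟨ha, hp⟩
  exact h a ha hp

lemma sum_phos' (r₁ r₂ : ℝ) (P : Reaction (PhosSp n) → Prop) [inst : DecidablePred P] :
    ∑ x ∈ (phosNetwork n r₁ r₂).filter P, x.rate
      = r₁ * ((Dom n).filter (fun p => P (fwdR r₁ p))).card
        + r₂ * ((Dom n).filter (fun p => P (bwdR r₂ p))).card := by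
  have he : inst = fun a => Classical.propDecidable (P a) := Subsingleton.elim _ _
  rw [he]
  exact sum_phos r₁ r₂ P

lemma card_dom_fwd (u : Fin n → Bool) :
    ((Dom n).filter (fun p => p.2 = u)).card = n - cnt u := by
  rw [← card_false u]
  apply Finset.card_nbij' (fun p => p.1) (fun i => (i, u))
  · intro p hp
    simp only [Dom, Finset.mem_coe, Finset.mem_filter, Finset.mem_univ, true_and] at hp ⊢
    rw [← hp.2]; exact hp.1
  · intro i hi
    simp only [Finset.mem_coe, Finset.mem_filter, Finset.mem_univ, true_and] at hi
    simp [Dom, hi]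
  · intro p hp
    simp only [Dom, Finset.mem_coe, Finset.mem_filter, Finset.mem_univ, true_and] at hp
    rw [← hp.2]
  · intro i _; rfl

lemma reag_bwd_iff {t : Fin n → Bool} {p : Fin n × (Fin n → Bool)} (hp : p.2 p.1 = false) :
    Function.update p.2 p.1 true = t ↔ (t p.1 = true ∧ p.2 = Function.update t p.1 false) := by
  constructor
  · rintro rfl
    refine ⟨by simp, ?_⟩
    rw [Function.update_idem, ← hp, Function.update_eq_self]
  · rintro ⟨h1, h2⟩
    rw [h2]
    exact update_false_update_true h1

lemma card_dom_bwd (t : Fin n → Bool) :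
    ((Dom n).filter (fun p => Function.update p.2 p.1 true = t)).card = cnt t := by
  rw [cnt]
  apply Finset.card_nbij' (fun p => p.1) (fun i => (i, Function.update t i false))
  · intro p hp
    simp only [Dom, Finset.mem_coe, Finset.mem_filter, Finset.mem_univ, true_and] at hp ⊢
    exact ((reag_bwd_iff hp.1).1 hp.2).1
  · intro i hi
    simp only [Finset.mem_coe, Finset.mem_filter, Finset.mem_univ, true_and] at hi
    simp only [Dom, Finset.mem_coe, Finset.mem_filter, Finset.mem_univ, true_and]
    exact ⟨by simp, update_false_update_true hi⟩
  · intro p hp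
    simp only [Dom, Finset.mem_coe, Finset.mem_filter, Finset.mem_univ, true_and] at hp
    obtain ⟨-, h2⟩ := (reag_bwd_iff hp.1).1 hp.2
    exact Prod.ext rfl h2.symm
  · intro i _; rfl

lemma rrSet_pair (r₁ r₂ : ℝ) (u : Fin n → Bool) (π₀ : Multiset (PhosSp n)) :
    rrSet (phosNetwork n r₁ r₂) {Sum.inr u, Sum.inl ()} {π | mlift (phosSetoid n) π₀ π}
      = (if π₀.map Fm = {Sum.inr (cnt u), Sum.inl ()}
            then -(r₁ * ((n - cnt u : ℕ) : ℝ)) else 0)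
        + (if π₀.map Fm = {Sum.inr (cnt u + 1)}
            then r₁ * ((n - cnt u : ℕ) : ℝ) else 0) := by
  classical
  rw [rrSet_decomp]
  have hBmem : ∀ π : Multiset (PhosSp n),
      π ∈ {π | mlift (phosSetoid n) π₀ π} ↔ π₀.map Fm = π.map Fm := fun π => mlift_phos_iff π₀ π
  have hbno : ∀ B' : Set (Multiset (PhosSp n)), ∀ p ∈ Dom n,
      ¬ ((bwdR r₂ p).reag = ({Sum.inr u, Sum.inl ()} : Multiset (PhosSp n))
        ∧ (bwdR r₂ p).prod ∈ B' ∧ (bwdR r₂ p).prod ≠ {Sum.inr u, Sum.inl ()}) := by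
    rintro B' p _ ⟨h1, -⟩
    have := congrArg Multiset.card h1
    simp [bwdR] at this
  congr 1
  · -- diagonal part
    have hρ : ({Sum.inr u, Sum.inl ()} : Multiset (PhosSp n)) ∈ {π | mlift (phosSetoid n) π₀ π}
        ↔ π₀.map Fm = {Sum.inr (cnt u), Sum.inl ()} := by
      rw [hBmem]; simp [Fm_inr, Fm_inl]
    have hdiag : rr (phosNetwork n r₁ r₂) {Sum.inr u, Sum.inl ()} {Sum.inr u, Sum.inl ()}
        = -(r₁ * ((n - cnt u : ℕ) : ℝ)) := by
      rw [rr_diag, sum_phos']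
      have hiff : ∀ p ∈ Dom n,
          ((fwdR r₁ p).reag = ({Sum.inr u, Sum.inl ()} : Multiset (PhosSp n))
            ∧ (fwdR r₁ p).prod ≠ {Sum.inr u, Sum.inl ()}) ↔ p.2 = u := by
        intro p _
        simp only [fwdR]
        constructor
        · rintro ⟨h1, -⟩; exact pair_eq_pair_iff.1 h1
        · rintro rfl
          refine ⟨rfl, fun hc => ?_⟩
          have := congrArg Multiset.card hc
          simp at this
      have hno : ∀ p ∈ Dom n,
          ¬ ((bwdR r₂ p).reag = ({Sum.inr u, Sum.inl ()} : Multiset (PhosSp n))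
            ∧ (bwdR r₂ p).prod ≠ {Sum.inr u, Sum.inl ()}) := by
        rintro p _ ⟨h1, -⟩
        have := congrArg Multiset.card h1
        simp [bwdR] at this
      rw [filter_congr'' hiff, filter_eq_empty'' hno, card_dom_fwd]
      simp
    rw [hdiag]
    by_cases hm : π₀.map Fm = ({Sum.inr (cnt u), Sum.inl ()} : Multiset (Unit ⊕ ℕ))
    · rw [if_pos (hρ.2 hm), if_pos hm]
    · rw [if_neg (fun hc => hm (hρ.1 hc)), if_neg hm]
  · -- off-diagonal part
    rw [sum_phos', filter_eq_empty'' (hbno _)]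
    by_cases hm : π₀.map Fm = ({Sum.inr (cnt u + 1)} : Multiset (Unit ⊕ ℕ))
    · have hiff : ∀ p ∈ Dom n,
          ((fwdR r₁ p).reag = ({Sum.inr u, Sum.inl ()} : Multiset (PhosSp n))
            ∧ (fwdR r₁ p).prod ∈ {π | mlift (phosSetoid n) π₀ π}
            ∧ (fwdR r₁ p).prod ≠ {Sum.inr u, Sum.inl ()}) ↔ p.2 = u := by
        intro p hp
        simp only [Dom, Finset.mem_filter, Finset.mem_univ, true_and] at hp
        simp only [fwdR]
        constructor
        · rintro ⟨h1, -⟩; exact pair_eq_pair_iff.1 h1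
        · rintro rfl
          refine ⟨rfl, ?_, fun hc => ?_⟩
          · rw [Set.mem_setOf_eq, mlift_phos_iff]
            simp only [Multiset.map_singleton, Fm_inr, cnt_update_true hp, hm]
          · have := congrArg Multiset.card hc
            simp at this
      rw [filter_congr'' hiff, card_dom_fwd, if_pos hm]
      simp
    · have hno : ∀ p ∈ Dom n,
          ¬ ((fwdR r₁ p).reag = ({Sum.inr u, Sum.inl ()} : Multiset (PhosSp n))
            ∧ (fwdR r₁ p).prod ∈ {π | mlift (phosSetoid n) π₀ π}
            ∧ (fwdR r₁ p).prod ≠ {Sum.inr u, Sum.inl ()}) := by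
        intro p hp
        simp only [Dom, Finset.mem_filter, Finset.mem_univ, true_and] at hp
        simp only [fwdR]
        rintro ⟨h1, h2, -⟩
        have hu : p.2 = u := pair_eq_pair_iff.1 h1
        rw [Set.mem_setOf_eq, mlift_phos_iff] at h2
        rw [hu] at hp
        apply hm
        rw [h2]
        simp only [Multiset.map_singleton, Fm_inr, hu, cnt_update_true hp]
      rw [filter_eq_empty'' hno, if_neg hm]
      simp

lemma rrSet_single (r₁ r₂ : ℝ) (t : Fin n → Bool) (π₀ : Multiset (PhosSp n)) :
    rrSet (phosNetwork n r₁ r₂) {Sum.inr t} {π | mlift (phosSetoid n) π₀ π}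
      = (if π₀.map Fm = {Sum.inr (cnt t)}
            then -(r₂ * ((cnt t : ℕ) : ℝ)) else 0)
        + (if π₀.map Fm = {Sum.inr (cnt t - 1), Sum.inl ()}
            then r₂ * ((cnt t : ℕ) : ℝ) else 0) := by
  classical
  rw [rrSet_decomp]
  have hfno : ∀ B' : Set (Multiset (PhosSp n)), ∀ p ∈ Dom n,
      ¬ ((fwdR r₁ p).reag = ({Sum.inr t} : Multiset (PhosSp n))
        ∧ (fwdR r₁ p).prod ∈ B' ∧ (fwdR r₁ p).prod ≠ {Sum.inr t}) := by
    rintro B' p _ ⟨h1, -⟩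
    have := congrArg Multiset.card h1
    simp [fwdR] at this
  congr 1
  · -- diagonal part
    have hρ : ({Sum.inr t} : Multiset (PhosSp n)) ∈ {π | mlift (phosSetoid n) π₀ π}
        ↔ π₀.map Fm = {Sum.inr (cnt t)} := by
      rw [Set.mem_setOf_eq, mlift_phos_iff]; simp [Fm_inr]
    have hdiag : rr (phosNetwork n r₁ r₂) {Sum.inr t} {Sum.inr t}
        = -(r₂ * ((cnt t : ℕ) : ℝ)) := by
      rw [rr_diag, sum_phos']
      have hno : ∀ p ∈ Dom n,
          ¬ ((fwdR r₁ p).reag = ({Sum.inr t} : Multiset (PhosSp n))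
            ∧ (fwdR r₁ p).prod ≠ {Sum.inr t}) := by
        rintro p _ ⟨h1, -⟩
        have := congrArg Multiset.card h1
        simp [fwdR] at this
      have hiff : ∀ p ∈ Dom n,
          ((bwdR r₂ p).reag = ({Sum.inr t} : Multiset (PhosSp n))
            ∧ (bwdR r₂ p).prod ≠ {Sum.inr t})
          ↔ Function.update p.2 p.1 true = t := by
        intro p _
        simp only [bwdR, Multiset.singleton_inj]
        constructor
        · rintro ⟨h1, -⟩; simpa using h1
        · intro h1
          refine ⟨by simpa using h1, fun hc => ?_⟩
          have := congrArg Multiset.card hc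
          simp at this
      rw [filter_eq_empty'' hno, filter_congr'' hiff, card_dom_bwd]
      simp
    rw [hdiag]
    by_cases hm : π₀.map Fm = ({Sum.inr (cnt t)} : Multiset (Unit ⊕ ℕ))
    · rw [if_pos (hρ.2 hm), if_pos hm]
    · rw [if_neg (fun hc => hm (hρ.1 hc)), if_neg hm]
  · -- off-diagonal part
    rw [sum_phos', filter_eq_empty'' (hfno _)]
    by_cases hm : π₀.map Fm = ({Sum.inr (cnt t - 1), Sum.inl ()} : Multiset (Unit ⊕ ℕ))
    · have hiff : ∀ p ∈ Dom n,
          ((bwdR r₂ p).reag = ({Sum.inr t} : Multiset (PhosSp n))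
            ∧ (bwdR r₂ p).prod ∈ {π | mlift (phosSetoid n) π₀ π}
            ∧ (bwdR r₂ p).prod ≠ {Sum.inr t})
          ↔ Function.update p.2 p.1 true = t := by
        intro p hp
        simp only [Dom, Finset.mem_filter, Finset.mem_univ, true_and] at hp
        simp only [bwdR, Multiset.singleton_inj]
        constructor
        · rintro ⟨h1, -⟩; simpa using h1
        · intro h1
          obtain ⟨ht, hpt⟩ := (reag_bwd_iff hp).1 h1
          have hcnt : cnt p.2 = cnt t - 1 := by
            have h3 := cnt_update_false ht
            rw [← hpt] at h3
            omega
          refine ⟨by simpa using h1, ?_, fun hc => ?_⟩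
          · rw [Set.mem_setOf_eq, mlift_phos_iff]
            simp [Multiset.insert_eq_cons, Fm_inr, Fm_inl, hcnt, hm]
          · have := congrArg Multiset.card hc
            simp at this
      rw [filter_congr'' hiff, card_dom_bwd, if_pos hm]
      simp
    · have hno : ∀ p ∈ Dom n,
          ¬ ((bwdR r₂ p).reag = ({Sum.inr t} : Multiset (PhosSp n))
            ∧ (bwdR r₂ p).prod ∈ {π | mlift (phosSetoid n) π₀ π}
            ∧ (bwdR r₂ p).prod ≠ {Sum.inr t}) := by
        intro p hp
        simp only [Dom, Finset.mem_filter, Finset.mem_univ, true_and] at hp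
        simp only [bwdR, Multiset.singleton_inj]
        rintro ⟨h1, h2, -⟩
        have h1' : Function.update p.2 p.1 true = t := by simpa using h1
        obtain ⟨ht, hpt⟩ := (reag_bwd_iff hp).1 h1'
        have hcnt : cnt p.2 = cnt t - 1 := by
          have h3 := cnt_update_false ht
          rw [← hpt] at h3
          omega
        rw [Set.mem_setOf_eq, mlift_phos_iff] at h2
        apply hm
        rw [h2]
        simp [Multiset.insert_eq_cons, Fm_inr, Fm_inl, hcnt]
      rw [filter_eq_empty'' hno, if_neg hm]
      simp

lemma reags_cases {u : Fin n → Bool} {ρ : Multiset (PhosSp n)} {r₁ r₂ : ℝ}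
    (h : (Sum.inr u ::ₘ ρ) ∈ Reags (phosNetwork n r₁ r₂)) :
    ρ = {Sum.inl ()} ∨ ρ = 0 := by
  classical
  simp only [Reags, Finset.mem_image] at h
  obtain ⟨x, hx, hr⟩ := h
  rw [phosNetwork_eq, Finset.mem_union] at hx
  rcases hx with hx | hx
  · obtain ⟨p, _, rfl⟩ := Finset.mem_image.1 hx
    left
    have hr' : (Sum.inr p.2 : PhosSp n) ::ₘ {Sum.inl ()} = Sum.inr u ::ₘ ρ := hr
    rcases Multiset.cons_eq_cons.1 hr' with ⟨-, h2⟩ | ⟨-, cs, h1, -⟩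
    · exact h2.symm
    · exfalso
      have hmem := Multiset.mem_cons_self (Sum.inr u : PhosSp n) cs
      rw [← h1] at hmem
      simp at hmem
  · obtain ⟨p, _, rfl⟩ := Finset.mem_image.1 hx
    right
    have hc := congrArg Multiset.card hr
    simp only [bwdR, Multiset.card_singleton, Multiset.card_cons] at hc
    rw [← Multiset.card_eq_zero]
    omega

end Phos

/-- SE of the random-mechanism multisite phosphorylation network. -/
theorem isSE_phosphorylation (n : ℕ) (hn : 1 ≤ n) (r₁ r₂ : ℝ)
    (h₁ : 0 < r₁) (h₂ : 0 < r₂) :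
    isSE (phosSetoid n) (phosNetwork n r₁ r₂) := by
  intro s s' hss' ρ hreag π₀ hπ₀
  have hss : Fm s = Fm s' := hss'
  cases s with
  | inl a =>
    cases s' with
    | inl b => cases a; cases b; rfl
    | inr v => exact absurd hss (by simp [Fm])
  | inr u =>
    cases s' with
    | inl b => exact absurd hss (by simp [Fm])
    | inr v =>
      have hc : cnt u = cnt v := by simpa [Fm, cnt] using hss
      have hshape : ρ = {Sum.inl ()} ∨ ρ = 0 := by
        rcases hreag with h | h
        · exact reags_cases h
        · exact reags_cases h
      have e1 : ∀ w : Fin n → Bool,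
          (Sum.inr w ::ₘ {Sum.inl ()} : Multiset (PhosSp n)) = {Sum.inr w, Sum.inl ()} :=
        fun _ => rfl
      have e2 : ∀ w : Fin n → Bool,
          (Sum.inr w ::ₘ 0 : Multiset (PhosSp n)) = {Sum.inr w} := fun _ => rfl
      rcases hshape with rfl | rfl
      · rw [e1, e1, rrSet_pair, rrSet_pair, hc]
      · rw [e2, e2, rrSet_single, rrSet_single, hc]

end
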